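/- Let A and B be n×n matrices over a commutative ring, and let 1 ≤ i ≤ n. If A is lower-triangular or B is upper-triangular, then the leading principal i×i minor of AB equals the product of the leading principal i×i minors of A and B. -/

import Mathlib

open Matrix

/-- If `A` is lower-triangular or `B` is upper-triangular, the leading principal
`i × i` minor of `A * B` is the product of the leading principal `i × i` minors
of `A` and `B`. -/
theorem stmt0 {R : Type*} [CommRing R] {n i : ℕ} (hi1 : 1 ≤ i) (hin : i ≤ n)
    (A B : Matrix (Fin n) (Fin n) R)
    (h : (∀ p q : Fin n, p < q → A p q = 0) ∨ (∀ p q : Fin n, q < p → B p q = 0)) :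
    ((A * B).submatrix (Fin.castLE hin) (Fin.castLE hin)).det =
      (A.submatrix (Fin.castLE hin) (Fin.castLE hin)).det *
        (B.submatrix (Fin.castLE hin) (Fin.castLE hin)).det := by
  have key : (A * B).submatrix (Fin.castLE hin) (Fin.castLE hin) =
      A.submatrix (Fin.castLE hin) (Fin.castLE hin) *
        B.submatrix (Fin.castLE hin) (Fin.castLE hin) := by
    ext p q
    simp only [Matrix.mul_apply, Matrix.submatrix_apply]
    rw [show (Finset.univ : Finset (Fin i)) =
        (Finset.univ : Finset (Fin i)) from rfl]
    have : ∑ k : Fin i, A (Fin.castLE hin p) (Fin.castLE hin k) *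
        B (Fin.castLE hin k) (Fin.castLE hin q) =
        ∑ k ∈ Finset.univ.map (Fin.castLEEmb hin),
          A (Fin.castLE hin p) k * B k (Fin.castLE hin q) := by
      rw [Finset.sum_map]; rfl
    rw [this]
    apply (Finset.sum_subset (Finset.subset_univ _) _).symm
    intro k _ hk
    have hki : ¬ (k : ℕ) < i := by
      intro hlt
      exact hk (by simp [Fin.castLEEmb, Fin.castLE]; exact ⟨⟨k, hlt⟩, Fin.ext rfl⟩)
    rcases h with hA | hB
    · rw [hA _ _ (by simpa [Fin.lt_iff_val_lt_val] using lt_of_lt_of_le p.isLt (le_of_not_gt hki)), zero_mul]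
    · rw [hB _ _ (by simpa [Fin.lt_iff_val_lt_val] using lt_of_lt_of_le q.isLt (le_of_not_gt hki)), mul_zero]
  rw [key, Matrix.det_mul]
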